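/- Let ρ_c ∈ (0,∞), and for n ≥ 0 let δ_n := x_{n+1} − x_n where (x_n) is a decreasing sequence of negative integers with x_0 = 0 and lim x_n/δ_n = 0. Define y_n := ⌊ρ_c δ_n⌋. Then lim_{n→∞} (1/|x_n|) Σ_{i=0}^{n−1} y_i = ρ_c. -/

import Mathlib

open Filter

/-- Let `(x_n)` be a strictly decreasing sequence of integers with `x_0 = 0` (hence
negative for `n ≥ 1`), let `δ_n` be the gap between `x_n` and `x_{n+1}` and assume
`x_n / δ_n → 0`. Placing `y_n = ⌊ρ_c δ_n⌋` particles in the `n`-th gap, the left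
density is critical: `(1/|x_n|) Σ_{i=0}^{n-1} y_i → ρ_c`. -/
theorem critical_density_of_spikes (ρc : ℝ) (hρc : 0 < ρc)
    (x : ℕ → ℤ) (hx0 : x 0 = 0) (hanti : StrictAnti x)
    (hlim : Tendsto (fun n : ℕ => (x n : ℝ) / ((x n : ℝ) - (x (n + 1) : ℝ)))
      atTop (nhds 0)) :
    Tendsto (fun n : ℕ =>
        (∑ i ∈ Finset.range n, (⌊ρc * ((x i : ℝ) - (x (i + 1) : ℝ))⌋ : ℝ)) /
          |(x n : ℝ)|)
      atTop (nhds ρc) := by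
  have hstep : ∀ n : ℕ, x (n + 1) + 1 ≤ x n := by
    intro n
    have := hanti (show n < n + 1 by omega)
    omega
  have hxle : ∀ n : ℕ, x n ≤ -(n : ℤ) := by
    intro n
    induction n with
    | zero => simp [hx0]
    | succ k ih =>
      have := hstep k
      push_cast
      omega
  have hδ : ∀ n : ℕ, (1 : ℝ) ≤ (x n : ℝ) - (x (n + 1) : ℝ) := by
    intro n
    have h := hstep n
    have h' : ((x (n + 1) : ℤ) : ℝ) + 1 ≤ ((x n : ℤ) : ℝ) := by exact_mod_cast h
    linarith
  have hxneg : ∀ n : ℕ, 1 ≤ n → (x n : ℝ) ≤ -(n : ℝ) := by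
    intro n hn
    exact_mod_cast hxle n
  have hpos : ∀ n : ℕ, 1 ≤ n → (0 : ℝ) < -(x n : ℝ) := by
    intro n hn
    have h1 := hxneg n hn
    have h2 : (1 : ℝ) ≤ (n : ℝ) := by exact_mod_cast hn
    linarith
  -- key : n / (-x n) → 0
  have hkey : Tendsto (fun n : ℕ => (n : ℝ) / (-(x n : ℝ))) atTop (nhds 0) := by
    rw [Metric.tendsto_atTop] at hlim ⊢
    intro ε hε
    obtain ⟨M, hM⟩ := hlim (ε / 2) (by linarith)
    refine ⟨max (M + 1) 2, fun n hn => ?_⟩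
    have hn2 : 2 ≤ n := le_trans (le_max_right _ _) hn
    obtain ⟨m, rfl⟩ : ∃ m, n = m + 1 := ⟨n - 1, by omega⟩
    have hm1 : 1 ≤ m := by omega
    have hmM : M ≤ m := by
      have := le_trans (le_max_left (M + 1) 2) hn
      omega
    have hd := hδ m
    have hdpos : (0 : ℝ) < (x m : ℝ) - (x (m + 1) : ℝ) := by linarith
    have hMm := hM m hmM
    rw [Real.dist_eq, sub_zero, abs_div] at hMm
    have hxm : |(x m : ℝ)| = -(x m : ℝ) := abs_of_nonpos (by linarith [hpos m hm1])
    have habsd : |(x m : ℝ) - (x (m + 1) : ℝ)| = (x m : ℝ) - (x (m + 1) : ℝ) :=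
      abs_of_pos hdpos
    rw [hxm, habsd, div_lt_iff₀ hdpos] at hMm
    -- -(x m) < ε/2 * δ m ; also m ≤ -(x m)
    have hmle : (m : ℝ) ≤ -(x m : ℝ) := by
      have := hxneg m hm1
      linarith
    have hdm : (m : ℝ) < ε / 2 * ((x m : ℝ) - (x (m + 1) : ℝ)) := lt_of_le_of_lt hmle hMm
    have hxn : -(x (m + 1) : ℝ) = -(x m : ℝ) + ((x m : ℝ) - (x (m + 1) : ℝ)) := by ring
    have hxnpos := hpos (m + 1) (by omega)
    rw [Real.dist_eq, sub_zero]
    have hnn : (0 : ℝ) ≤ ((m + 1 : ℕ) : ℝ) / (-(x (m + 1) : ℝ)) :=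
      div_nonneg (by positivity) (le_of_lt hxnpos)
    rw [abs_of_nonneg hnn, div_lt_iff₀ hxnpos]
    push_cast
    -- need : m + 1 < ε * (-(x (m+1)))
    have hge : -(x (m + 1) : ℝ) > 2 / ε * (m : ℝ) := by
      rw [hxn]
      have h1 : ε / 2 * ((x m : ℝ) - (x (m + 1) : ℝ)) > (m : ℝ) := hdm
      have h2 : (x m : ℝ) - (x (m + 1) : ℝ) > 2 / ε * (m : ℝ) := by
        rw [gt_iff_lt, div_mul_eq_mul_div, div_lt_iff₀ hε] at *
        nlinarith
      have h3 : (0 : ℝ) ≤ -(x m : ℝ) := le_of_lt (hpos m hm1)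
      linarith
    have hm1' : (1 : ℝ) ≤ (m : ℝ) := by exact_mod_cast hm1
    have : ε * (-(x (m + 1) : ℝ)) > ε * (2 / ε * (m : ℝ)) := by
      exact mul_lt_mul_of_pos_left hge hε
    have hsimp : ε * (2 / ε * (m : ℝ)) = 2 * (m : ℝ) := by
      field_simp
    nlinarith
  -- telescoping sum
  have htel : ∀ n : ℕ, ∑ i ∈ Finset.range n, ((x i : ℝ) - (x (i + 1) : ℝ)) = -(x n : ℝ) := by
    intro n
    rw [Finset.sum_range_sub' (fun i => ((x i : ℝ)))]
    simp [hx0]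
  -- bounds on the sum
  have hupper : ∀ n : ℕ,
      (∑ i ∈ Finset.range n, (⌊ρc * ((x i : ℝ) - (x (i + 1) : ℝ))⌋ : ℝ))
        ≤ ρc * (-(x n : ℝ)) := by
    intro n
    calc (∑ i ∈ Finset.range n, (⌊ρc * ((x i : ℝ) - (x (i + 1) : ℝ))⌋ : ℝ))
        ≤ ∑ i ∈ Finset.range n, ρc * ((x i : ℝ) - (x (i + 1) : ℝ)) :=
          Finset.sum_le_sum (fun i _ => Int.floor_le _)
      _ = ρc * (-(x n : ℝ)) := by rw [← Finset.mul_sum, htel]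
  have hlower : ∀ n : ℕ,
      ρc * (-(x n : ℝ)) - n
        ≤ (∑ i ∈ Finset.range n, (⌊ρc * ((x i : ℝ) - (x (i + 1) : ℝ))⌋ : ℝ)) := by
    intro n
    have : ∑ i ∈ Finset.range n, (ρc * ((x i : ℝ) - (x (i + 1) : ℝ)) - 1)
        ≤ ∑ i ∈ Finset.range n, (⌊ρc * ((x i : ℝ) - (x (i + 1) : ℝ))⌋ : ℝ) :=
      Finset.sum_le_sum (fun i _ => le_of_lt (Int.sub_one_lt_floor _))
    calc ρc * (-(x n : ℝ)) - n
        = ∑ i ∈ Finset.range n, (ρc * ((x i : ℝ) - (x (i + 1) : ℝ)) - 1) := by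
          rw [Finset.sum_sub_distrib, ← Finset.mul_sum, htel]
          simp
      _ ≤ _ := this
  -- squeeze
  have hlo : Tendsto (fun n : ℕ => ρc - (n : ℝ) / (-(x n : ℝ))) atTop (nhds ρc) := by
    have := Tendsto.sub
      (tendsto_const_nhds : Tendsto (fun _ : ℕ => ρc) atTop (nhds ρc)) hkey
    simpa using this
  refine tendsto_of_tendsto_of_tendsto_of_le_of_le' hlo tendsto_const_nhds ?_ ?_
  · filter_upwards [eventually_ge_atTop 1] with n hn
    have hp := hpos n hn
    have habs : |(x n : ℝ)| = -(x n : ℝ) := abs_of_nonpos (by linarith)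
    rw [habs, le_div_iff₀ hp]
    have := hlower n
    have hexp : (ρc - (n : ℝ) / (-(x n : ℝ))) * (-(x n : ℝ)) = ρc * (-(x n : ℝ)) - n := by
      rw [sub_mul, div_mul_cancel₀ _ (ne_of_gt hp)]
    linarith [hexp ▸ this]
  · filter_upwards [eventually_ge_atTop 1] with n hn
    have hp := hpos n hn
    have habs : |(x n : ℝ)| = -(x n : ℝ) := abs_of_nonpos (by linarith)
    rw [habs, div_le_iff₀ hp]
    linarith [hupper n]
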